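/- Let g ⊆ so(1,n+1)_{ℝp} be a Lie subalgebra containing (i) an element of the form (0, A_r, X_r + ψ(A_r)) for each member A_r of a generating set of a Lie subalgebra h ⊆ so(m) (with X_r ∈ ℝᵐ and ψ : h → ℝ^{n−m} linear, vanishing on [h,h]), and (ii) all elements (0,0,X) with X ∈ ℝᵐ. Then g contains g^{4,h,m,ψ} = {(0, A, X + ψ(A)) : A ∈ h, X ∈ ℝᵐ}. -/

import Mathlib

open Matrix

attribute [local instance] LieRing.ofAssociativeRing

/-- Index type for `ℝ^{1,n+1}` with basis `p, e_1, …, e_n, q`. -/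
abbrev Idx (n : ℕ) := Fin 1 ⊕ (Fin n ⊕ Fin 1)

/-- The Gram matrix `[[0,0,1],[0,E_n,0],[1,0,0]]` of the Minkowski form `η`. -/
noncomputable def eta (n : ℕ) : Matrix (Idx n) (Idx n) ℝ :=
  Matrix.fromBlocks 0 (Matrix.of fun _ j => Sum.elim (fun _ => (0 : ℝ)) (fun _ => 1) j)
    (Matrix.of fun i _ => Sum.elim (fun _ => (0 : ℝ)) (fun _ => 1) i)
    (Matrix.fromBlocks 1 0 0 0)

/-- The matrix `[[a, X, 0], [0, A, -Xᵀ], [0, 0, -a]]` associated to the triple `(a, A, X)`. -/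
noncomputable def toMat {n : ℕ} (a : ℝ) (A : Matrix (Fin n) (Fin n) ℝ) (X : Fin n → ℝ) :
    Matrix (Idx n) (Idx n) ℝ :=
  Matrix.fromBlocks (Matrix.of fun _ _ => a)
    (Matrix.of fun _ j => Sum.elim X (fun _ => (0 : ℝ)) j)
    0
    (Matrix.fromBlocks A (Matrix.of fun i _ => -X i) 0 (Matrix.of fun _ _ => -a))

/-- The first basis vector `p`. -/
noncomputable def pvec (n : ℕ) : Idx n → ℝ := Pi.single (Sum.inl 0) 1

/-- `so(1,n+1)`: matrices skew-symmetric with respect to `η`. -/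
noncomputable def soEta (n : ℕ) : Set (Matrix (Idx n) (Idx n) ℝ) :=
  {M | Mᵀ * eta n + eta n * M = 0}

/-- `so(1,n+1)_{ℝp}`: elements of `so(1,n+1)` preserving the isotropic line `ℝ p`. -/
noncomputable def stab (n : ℕ) : Set (Matrix (Idx n) (Idx n) ℝ) :=
  {M | M ∈ soEta n ∧ M.mulVec (pvec n) ∈ Submodule.span ℝ {pvec n}}

/-- `so(n)` as a Lie subalgebra of the matrix Lie algebra. -/
noncomputable def son (n : ℕ) : LieSubalgebra ℝ (Matrix (Fin n) (Fin n) ℝ) :=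
  skewAdjointMatricesLieSubalgebra (1 : Matrix (Fin n) (Fin n) ℝ)

lemma toMat_add {n : ℕ} (a b : ℝ) (A B : Matrix (Fin n) (Fin n) ℝ) (X Y : Fin n → ℝ) :
    toMat (a + b) (A + B) (X + Y) = toMat a A X + toMat b B Y := by
  ext i j
  rcases i with i | i | i <;> rcases j with j | j | j <;>
    simp [toMat, Matrix.fromBlocks] <;> ring

lemma toMat_smul {n : ℕ} (c a : ℝ) (A : Matrix (Fin n) (Fin n) ℝ) (X : Fin n → ℝ) :
    toMat (c * a) (c • A) (c • X) = c • toMat a A X := by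
  ext i j
  rcases i with i | i | i <;> rcases j with j | j | j <;>
    simp [toMat, Matrix.fromBlocks] <;> ring

lemma toMat_zero {n : ℕ} : toMat 0 (0 : Matrix (Fin n) (Fin n) ℝ) 0 = 0 := by
  ext i j
  rcases i with i | i | i <;> rcases j with j | j | j <;>
    simp [toMat, Matrix.fromBlocks]

lemma toMat_bracket {n : ℕ} (A B : Matrix (Fin n) (Fin n) ℝ) (X Y : Fin n → ℝ)
    (hAY : A.mulVec Y = 0) (hBX : B.mulVec X = 0)
    (hXB : Matrix.vecMul X B = 0) (hYA : Matrix.vecMul Y A = 0) :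
    ⁅toMat 0 A X, toMat 0 B Y⁆ = toMat 0 ⁅A, B⁆ 0 := by
  have hAY' : ∀ i, ∑ j, A i j * Y j = 0 := fun i => by
    simpa [Matrix.mulVec, dotProduct] using congrFun hAY i
  have hBX' : ∀ i, ∑ j, B i j * X j = 0 := fun i => by
    simpa [Matrix.mulVec, dotProduct] using congrFun hBX i
  have hXB' : ∀ j, ∑ k, X k * B k j = 0 := fun j => by
    simpa [Matrix.vecMul, dotProduct] using congrFun hXB j
  have hYA' : ∀ j, ∑ k, Y k * A k j = 0 := fun j => by
    simpa [Matrix.vecMul, dotProduct] using congrFun hYA j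
  have hXB'' : ∀ j, ∑ k, B k j * X k = 0 := fun j => by
    rw [← hXB' j]; exact Finset.sum_congr rfl fun _ _ => mul_comm _ _
  have hYA'' : ∀ j, ∑ k, A k j * Y k = 0 := fun j => by
    rw [← hYA' j]; exact Finset.sum_congr rfl fun _ _ => mul_comm _ _
  ext i j
  rcases i with i | i | i <;> rcases j with j | j | j <;>
    simp [Ring.lie_def, toMat, Matrix.mul_apply, Fintype.sum_sum_type,
      Matrix.fromBlocks, Matrix.mul_apply, hAY', hBX', hXB', hYA', hXB'', hYA'',
      mul_comm X,
      Finset.mul_sum, Finset.sum_sub_distrib] <;>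
    (try (rw [neg_add_eq_zero]; exact Finset.sum_congr rfl fun _ _ => mul_comm _ _))

/-- If a Lie subalgebra `g ⊆ so(1,n+1)_{ℝp}` contains an element `(0, A_r, X_r + ψ(A_r))` for each
member `A_r` of a generating set of `h ⊆ so(m)` (with `X_r ∈ ℝᵐ`, `ψ` linear and vanishing on the
commutant), and contains all `(0,0,X)` with `X ∈ ℝᵐ`, then `g` contains
`g^{4,h,m,ψ} = {(0, A, X + ψ(A)) : A ∈ h, X ∈ ℝᵐ}`. -/
theorem stmt19 (n m : ℕ) (hmn : m ≤ n)
    (g : LieSubalgebra ℝ (Matrix (Idx n) (Idx n) ℝ))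
    (hg : (g : Set (Matrix (Idx n) (Idx n) ℝ)) ⊆ stab n)
    (h : LieSubalgebra ℝ (Matrix (Fin n) (Fin n) ℝ)) (hh : h ≤ son n)
    (hblock : ∀ A ∈ h, ∀ i j : Fin n, m ≤ (i : ℕ) ∨ m ≤ (j : ℕ) → A i j = 0)
    (ψ : h →ₗ[ℝ] (Fin n → ℝ))
    (hψsupp : ∀ (A : h) (i : Fin n), (i : ℕ) < m → ψ A i = 0)
    (hψ : ∀ A B : h, ψ ⁅A, B⁆ = 0)
    (S : Set h) (hgen : LieSubalgebra.lieSpan ℝ h S = ⊤)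
    (hAr : ∀ A ∈ S, ∃ X : Fin n → ℝ, (∀ i : Fin n, m ≤ (i : ℕ) → X i = 0) ∧
      toMat 0 (A : Matrix (Fin n) (Fin n) ℝ) (X + ψ A) ∈ g)
    (hX : ∀ X : Fin n → ℝ, (∀ i : Fin n, m ≤ (i : ℕ) → X i = 0) →
      toMat 0 (0 : Matrix (Fin n) (Fin n) ℝ) X ∈ g) :
    ∀ (A : h) (X : Fin n → ℝ), (∀ i : Fin n, m ≤ (i : ℕ) → X i = 0) →
      toMat 0 (A : Matrix (Fin n) (Fin n) ℝ) (X + ψ A) ∈ g := by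
  intro A X hXsupp
  -- vanishing facts needed for brackets
  have hmv : ∀ (C : h) (Z : Fin n → ℝ), (∀ i : Fin n, (i : ℕ) < m → Z i = 0) →
      (C : Matrix (Fin n) (Fin n) ℝ).mulVec Z = 0 := by
    intro C Z hZ
    funext i
    rw [Matrix.mulVec, dotProduct]
    refine Finset.sum_eq_zero fun j _ => ?_
    rcases lt_or_ge (j : ℕ) m with hj | hj
    · rw [hZ j hj, mul_zero]
    · rw [hblock C C.2 i j (Or.inr hj), zero_mul]
  have hvm : ∀ (C : h) (Z : Fin n → ℝ), (∀ i : Fin n, (i : ℕ) < m → Z i = 0) →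
      Matrix.vecMul Z (C : Matrix (Fin n) (Fin n) ℝ) = 0 := by
    intro C Z hZ
    funext j
    rw [Matrix.vecMul, dotProduct]
    refine Finset.sum_eq_zero fun k _ => ?_
    rcases lt_or_ge (k : ℕ) m with hk | hk
    · rw [hZ k hk, zero_mul]
    · rw [hblock C C.2 k j (Or.inl hk), mul_zero]
  -- the set of elements of h with (0, A, ψ A) ∈ g is a Lie subalgebra of h
  let K : LieSubalgebra ℝ h :=
    { carrier := {C : h | toMat 0 (C : Matrix (Fin n) (Fin n) ℝ) (ψ C) ∈ g}
      add_mem' := by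
        intro C D hC hD
        have := g.add_mem hC hD
        rw [← toMat_add] at this
        simpa using this
      zero_mem' := by
        have : toMat 0 ((0 : h) : Matrix (Fin n) (Fin n) ℝ) (ψ 0) = 0 := by
          rw [map_zero]; simpa using toMat_zero
        simp only [Set.mem_setOf_eq, this]
        exact g.zero_mem
      smul_mem' := by
        intro c C hC
        have := g.smul_mem c hC
        rw [← toMat_smul c 0] at this
        simpa using this
      lie_mem' := by
        intro C D hC hD
        have hb := g.lie_mem hC hD
        rw [toMat_bracket _ _ _ _ (hmv C (ψ D) (hψsupp D)) (hmv D (ψ C) (hψsupp C))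
          (hvm D (ψ C) (hψsupp C)) (hvm C (ψ D) (hψsupp D))] at hb
        simpa [Set.mem_setOf_eq, hψ C D] using hb }
  have hSK : S ⊆ K := by
    intro C hC
    obtain ⟨X0, hX0supp, hX0⟩ := hAr C hC
    have h2 := hX X0 hX0supp
    have h3 := g.sub_mem hX0 h2
    have : toMat 0 (C : Matrix (Fin n) (Fin n) ℝ) (X0 + ψ C)
        - toMat 0 (0 : Matrix (Fin n) (Fin n) ℝ) X0
        = toMat 0 (C : Matrix (Fin n) (Fin n) ℝ) (ψ C) := by
      rw [sub_eq_iff_eq_add, ← toMat_add]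
      simp [add_comm]
    rwa [this] at h3
  have hK : ∀ C : h, C ∈ K := by
    intro C
    have := LieSubalgebra.lieSpan_le.mpr hSK
    rw [hgen] at this
    exact this (LieSubalgebra.mem_top C)
  have h1 : toMat 0 (A : Matrix (Fin n) (Fin n) ℝ) (ψ A) ∈ g := hK A
  have h2 := hX X hXsupp
  have h3 := g.add_mem h2 h1
  rw [← toMat_add] at h3
  simpa using h3
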